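/- Let Y, Z be n × n real matrices (viewed as n × n blocks with rows spanning) with Y Zᵀ + Z Yᵀ ≥ 0 (positive semidefinite) and rank [Z Y] = n. Then M = range of the map v ↦ (Zᵀ v, Yᵀ v) ⊆ ℝ^n × ℝ^n is a maximally monotone structure; conversely every maximally monotone structure in ℝ^n × ℝ^n arises this way. -/

import Mathlib

open Matrix

private lemma YZ_aux1 (n : ℕ) (A B : Matrix (Fin n) (Fin n) ℝ) (x : Fin n → ℝ) :
    x ⬝ᵥ ((A * B) *ᵥ x) = (Aᵀ *ᵥ x) ⬝ᵥ (B *ᵥ x) := by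
  rw [← mulVec_mulVec, dotProduct_mulVec, mulVec_transpose]

private lemma YZ_aux2 (n : ℕ) (Y Z : Matrix (Fin n) (Fin n) ℝ) (x : Fin n → ℝ) :
    x ⬝ᵥ ((Y * Zᵀ + Z * Yᵀ) *ᵥ x) = 2 * ((Yᵀ *ᵥ x) ⬝ᵥ (Zᵀ *ᵥ x)) := by
  rw [add_mulVec, dotProduct_add, YZ_aux1, YZ_aux1, dotProduct_comm (Zᵀ *ᵥ x)]
  ring

private lemma YZ_aux3 (n : ℕ) (Z Y : Matrix (Fin n) (Fin n) ℝ) :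
    (Zᵀ.mulVecLin).prod (Yᵀ.mulVecLin) =
      (LinearEquiv.sumArrowLequivProdArrow (Fin n) (Fin n) ℝ ℝ).toLinearMap ∘ₗ
        (Matrix.fromRows Zᵀ Yᵀ).mulVecLin := by
  ext x <;> simp [fromRows_mulVec, LinearEquiv.sumArrowLequivProdArrow]

private lemma YZ_aux4 (n : ℕ) (Z Y : Matrix (Fin n) (Fin n) ℝ) :
    Module.finrank ℝ
      (LinearMap.range ((Zᵀ.mulVecLin).prod (Yᵀ.mulVecLin))) =
    (Matrix.fromCols Z Y).rank := by
  rw [YZ_aux3, LinearMap.range_comp, LinearEquiv.finrank_map_eq,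
    ← Matrix.rank_transpose, transpose_fromCols]
  rfl

private lemma YZ_aux5 (n : ℕ) (M : Submodule ℝ ((Fin n → ℝ) × (Fin n → ℝ)))
    (hdim : Module.finrank ℝ M = n) :
    ∃ Y Z : Matrix (Fin n) (Fin n) ℝ,
      M = LinearMap.range ((Zᵀ.mulVecLin).prod (Yᵀ.mulVecLin)) := by
  have b : Module.Basis (Fin n) ℝ M := (Module.finBasis ℝ M).reindex (finCongr hdim)
  set Z : Matrix (Fin n) (Fin n) ℝ :=
    Matrix.of (fun i => ((b i : (Fin n → ℝ) × (Fin n → ℝ))).1) with hZ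
  set Y : Matrix (Fin n) (Fin n) ℝ :=
    Matrix.of (fun i => ((b i : (Fin n → ℝ) × (Fin n → ℝ))).2) with hY
  have key : (Zᵀ.mulVecLin).prod (Yᵀ.mulVecLin) =
      M.subtype ∘ₗ (b.equivFun.symm : (Fin n → ℝ) →ₗ[ℝ] M) := by
    apply LinearMap.ext
    intro x
    have h1 : (b.equivFun.symm x : M) = ∑ i, x i • b i := b.equivFun_symm_apply x
    simp only [LinearMap.coe_comp, Function.comp_apply, Submodule.coe_subtype,
      LinearMap.prod_apply, Function.prod, mulVecLin_apply, LinearEquiv.coe_coe, h1]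
    have hsum : ((∑ i, x i • b i : M) : (Fin n → ℝ) × (Fin n → ℝ))
        = ∑ i, x i • (b i : (Fin n → ℝ) × (Fin n → ℝ)) := by
      simp
    rw [hsum]
    refine Prod.ext ?_ ?_
    · ext j
      simp [mulVec, dotProduct, transpose_apply, Prod.fst_sum, Finset.sum_apply,
        Prod.smul_fst, mul_comm, hZ]
    · ext j
      simp [mulVec, dotProduct, transpose_apply, Prod.snd_sum, Finset.sum_apply,
        Prod.smul_snd, mul_comm, hY]
  refine ⟨Y, Z, ?_⟩
  rw [key, LinearMap.range_comp, LinearEquiv.range, Submodule.map_top,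
    Submodule.range_subtype]

theorem YZ_image_iff_maximally_monotone (n : ℕ) :
    (∀ Y Z : Matrix (Fin n) (Fin n) ℝ,
      (Y * Zᵀ + Z * Yᵀ).PosSemidef →
      (Matrix.fromCols Z Y).rank = n →
        (∀ p ∈ LinearMap.range ((Zᵀ.mulVecLin).prod (Yᵀ.mulVecLin)),
          (0 : ℝ) ≤ p.2 ⬝ᵥ p.1) ∧
        Module.finrank ℝ
          (LinearMap.range ((Zᵀ.mulVecLin).prod (Yᵀ.mulVecLin))) = n) ∧
    (∀ M : Submodule ℝ ((Fin n → ℝ) × (Fin n → ℝ)),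
      (∀ p ∈ M, (0 : ℝ) ≤ p.2 ⬝ᵥ p.1) → Module.finrank ℝ M = n →
        ∃ Y Z : Matrix (Fin n) (Fin n) ℝ,
          (Y * Zᵀ + Z * Yᵀ).PosSemidef ∧
          (Matrix.fromCols Z Y).rank = n ∧
          M = LinearMap.range ((Zᵀ.mulVecLin).prod (Yᵀ.mulVecLin))) := by
  constructor
  · intro Y Z hpsd hrank
    constructor
    · rintro p ⟨x, rfl⟩
      have h := hpsd.dotProduct_mulVec_nonneg x
      simp only [RCLike.star_def, starRingEnd_apply, star_trivial] at h
      have h2 := YZ_aux2 n Y Z x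
      simp only [LinearMap.prod_apply, Function.prod, mulVecLin_apply]
      nlinarith [h, h2]
    · rw [YZ_aux4, hrank]
  · intro M hmono hdim
    obtain ⟨Y, Z, hMeq⟩ := YZ_aux5 n M hdim
    refine ⟨Y, Z, ?_, ?_, hMeq⟩
    · refine PosSemidef.of_dotProduct_mulVec_nonneg ?_ ?_
      · unfold Matrix.IsHermitian
        rw [conjTranspose_eq_transpose_of_trivial, transpose_add, transpose_mul,
          transpose_mul, transpose_transpose, transpose_transpose, add_comm]
      · intro x
        simp only [RCLike.star_def, starRingEnd_apply, star_trivial]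
        have h2 := YZ_aux2 n Y Z x
        have hmem : (Zᵀ *ᵥ x, Yᵀ *ᵥ x) ∈ M := by
          rw [hMeq]
          exact ⟨x, rfl⟩
        have := hmono _ hmem
        simp only at this
        nlinarith [this, h2]
    · rw [← YZ_aux4, ← hMeq, hdim]
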